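/- Let A ∈ ℂ^{m×n}, B1 ∈ ℂ^{m×k}, C2 ∈ ℂ^{l×n}, B3 ∈ ℂ^{m×k3}, C3 ∈ ℂ^{l3×n}, B4 ∈ ℂ^{m×k4}, C4 ∈ ℂ^{l4×n} be given, and for X1 ∈ ℂ^{k×n}, X2 ∈ ℂ^{m×l}, X3 ∈ ℂ^{k3×l3}, X4 ∈ ℂ^{k4×l4} set f2(X1,X2,X3,X4) = A − B1·X1 − X2·C2 − B3·X3·C3 − B4·X4·C4. Then the maximum of r(f2(X1,X2,X3,X4)) over all such X1, X2, X3, X4 equals min{ m, n, r([A B1; C2 0; C3 0; C4 0]), r([A B1 B3 B4; C2 0 0 0]), r([A B1 B3; C2 0 0; C4 0 0]), r([A B1 B4; C2 0 0; C3 0 0]) }. -/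

import Mathlib

open Matrix Module Submodule Set

noncomputable section

namespace MaxRankAux

variable {F : Type*} [Field F]
variable {m n k l p q : Type*}

section Selection
variable [Fintype m] [Fintype n] [Fintype p] [Fintype q]
variable [DecidableEq m] [DecidableEq n]

lemma submatrix_eq_mul (A : Matrix m n F) (f : p → m) (g : q → n) :
    A.submatrix f g =
      (1 : Matrix m m F).submatrix f id * A * (1 : Matrix n n F).submatrix id g := by
  ext i j
  simp [mul_apply, one_apply, Finset.sum_ite_eq, Finset.sum_ite_eq', ite_mul, mul_ite]

lemma rank_submatrix_le' (A : Matrix m n F) (f : p → m) (g : q → n) :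
    (A.submatrix f g).rank ≤ A.rank := by
  rw [submatrix_eq_mul A f g]
  exact (rank_mul_le_left _ _).trans (rank_mul_le_right _ _)

end Selection

section SelEq
variable [Fintype m] [Fintype n] [Fintype p] [Fintype q]
variable [DecidableEq m] [DecidableEq n] [DecidableEq p] [DecidableEq q]

lemma rank_submatrix_eq (A : Matrix m n F) (e₁ : p ≃ m) (e₂ : q ≃ n) :
    (A.submatrix e₁ e₂).rank = A.rank := by
  refine le_antisymm (rank_submatrix_le' _ _ _) ?_
  have h := rank_submatrix_le' (A.submatrix e₁ e₂) e₁.symm e₂.symm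
  rwa [submatrix_submatrix, Equiv.self_comp_symm, Equiv.self_comp_symm, submatrix_id_id] at h

lemma le_rank_of_det_ne_zero {r : ℕ} (A : Matrix m n F) (f : Fin r → m) (g : Fin r → n)
    (h : (A.submatrix f g).det ≠ 0) : r ≤ A.rank := by
  have hu : IsUnit (A.submatrix f g) := (isUnit_iff_isUnit_det _).2 h.isUnit
  have hr := rank_of_isUnit _ hu
  calc r = (A.submatrix f g).rank := by rw [hr, Fintype.card_fin]
    _ ≤ A.rank := rank_submatrix_le' _ _ _

end SelEq

section Bounds
variable [Fintype m] [Fintype n] [Fintype k] [Fintype l]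
variable [DecidableEq m] [DecidableEq n]

lemma rank_sub_le_rows (A : Matrix m n F) (B : Matrix m k F) (C : Matrix l n F)
    (X : Matrix k l F) : (A - B * X * C).rank ≤ (fromRows A C).rank := by
  have h : fromCols (1 : Matrix m m F) (-(B * X)) * fromRows A C = A - B * X * C := by
    rw [fromCols_mul_fromRows, Matrix.one_mul, Matrix.neg_mul, ← sub_eq_add_neg]
  rw [← h]; exact rank_mul_le_right _ _

lemma rank_sub_le_cols (A : Matrix m n F) (B : Matrix m k F) (C : Matrix l n F)
    (X : Matrix k l F) : (A - B * X * C).rank ≤ (fromCols A B).rank := by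
  have h : fromCols A B * fromRows (1 : Matrix n n F) (-(X * C)) = A - B * X * C := by
    rw [fromCols_mul_fromRows, Matrix.mul_one, Matrix.mul_neg, ← sub_eq_add_neg, Matrix.mul_assoc]
  rw [← h]; exact rank_mul_le_left _ _

lemma rank_sub_sub_le (A : Matrix m n F) (B : Matrix m k F) (C : Matrix l n F)
    (Y : Matrix k n F) (Z : Matrix m l F) :
    (A - B * Y - Z * C).rank ≤ (fromBlocks A B C 0).rank := by
  have h1 : fromBlocks A B C (0 : Matrix l k F) * fromRows (1 : Matrix n n F) (-Y)
      = fromRows (A - B * Y) C := by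
    rw [fromBlocks_mul_fromRows, Matrix.mul_one, Matrix.mul_neg, ← sub_eq_add_neg,
      Matrix.mul_one, Matrix.zero_mul, add_zero]
  have h2 : fromCols (1 : Matrix m m F) (-Z) * fromRows (A - B * Y) C
      = A - B * Y - Z * C := by
    rw [fromCols_mul_fromRows, Matrix.one_mul, Matrix.neg_mul, ← sub_eq_add_neg]
  calc (A - B * Y - Z * C).rank
      = (fromCols (1 : Matrix m m F) (-Z)
          * (fromBlocks A B C (0 : Matrix l k F) * fromRows (1 : Matrix n n F) (-Y))).rank := by
        rw [h1, h2]
    _ ≤ _ := (rank_mul_le_right _ _).trans (rank_mul_le_left _ _)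

lemma rank_le_rank_fromColumns (A : Matrix m n F) (B : Matrix m k F) :
    A.rank ≤ (fromCols A B).rank := by
  have h : fromCols A B * fromRows (1 : Matrix n n F) (0 : Matrix k n F) = A := by
    rw [fromCols_mul_fromRows, Matrix.mul_one, Matrix.mul_zero, add_zero]
  conv_lhs => rw [← h]
  exact rank_mul_le_left _ _

lemma rank_le_rank_fromRows (A : Matrix m n F) (C : Matrix l n F) :
    A.rank ≤ (fromRows A C).rank := by
  rw [← rank_transpose A, ← rank_transpose (fromRows A C), transpose_fromRows]
  exact rank_le_rank_fromColumns _ _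

lemma rank_fromRows_one [Fintype p] [DecidableEq p] (W : Matrix p n F) :
    (fromRows W (1 : Matrix n n F)).rank = Fintype.card n := by
  refine le_antisymm (rank_le_card_width _) ?_
  have h : (fromRows W (1 : Matrix n n F)).submatrix (Sum.inr : n → p ⊕ n) (id : n → n)
      = (1 : Matrix n n F) := by
    ext i j; rfl
  calc Fintype.card n = ((fromRows W (1 : Matrix n n F)).submatrix Sum.inr id).rank := by
        rw [h, rank_one]
    _ ≤ _ := rank_submatrix_le' _ _ _

lemma rank_fromColumns_one [Fintype q] [DecidableEq q] (W : Matrix m q F) :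
    (fromCols W (1 : Matrix m m F)).rank = Fintype.card m := by
  rw [← rank_transpose, transpose_fromCols, transpose_one, rank_fromRows_one]

end Bounds
section Minor
variable [Fintype m] [Fintype n] [DecidableEq m] [DecidableEq n]

lemma exists_cols_li (A : Matrix m n F) {r : ℕ} (hr : A.rank = r) :
    ∃ g : Fin r → n, LinearIndependent F (fun j => Aᵀ (g j)) := by
  classical
  obtain ⟨b, hbsub, hbspan, hbind⟩ := exists_linearIndependent F (Set.range Aᵀ)
  have hbfin : b.Finite := hbind.setFinite
  haveI := hbfin.fintype
  have hcard : Fintype.card b = r := by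
    have h1 : finrank F (span F b) = b.toFinset.card := finrank_span_set_eq_card hbind
    rw [hbspan, show range Aᵀ = range A.col from rfl, ← rank_eq_finrank_span_cols, hr, Set.toFinset_card] at h1
    omega
  let e : Fin r ≃ b := (Fintype.equivFinOfCardEq hcard).symm
  have hmem : ∀ i : Fin r, ((e i : b) : m → F) ∈ Set.range Aᵀ := fun i => hbsub (e i).2
  choose g hg using hmem
  refine ⟨g, ?_⟩
  have heq : (fun j => Aᵀ (g j)) = fun j => ((e j : b) : m → F) := funext hg
  rw [heq]
  exact hbind.comp e e.injective

lemma exists_det_ne_zero (A : Matrix m n F) :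
    ∃ (f : Fin A.rank → m) (g : Fin A.rank → n), (A.submatrix f g).det ≠ 0 := by
  classical
  obtain ⟨g, hg⟩ := exists_cols_li A rfl
  set N : Matrix m (Fin A.rank) F := A.submatrix id g with hN
  have hrankN : N.rank = A.rank := by
    rw [rank_eq_finrank_span_cols]
    have h2 : N.col = fun j => Aᵀ (g j) := rfl
    rw [h2, finrank_span_eq_card hg, Fintype.card_fin]
  obtain ⟨f, hf⟩ := exists_cols_li Nᵀ (by rw [rank_transpose, hrankN])
  refine ⟨f, g, ?_⟩
  have hrows : LinearIndependent F (fun j => (A.submatrix f g) j) := by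
    have h3 : (fun j => (A.submatrix f g) j) = fun j => Nᵀᵀ (f j) := rfl
    rw [h3]; exact hf
  have hu : IsUnit (A.submatrix f g) := linearIndependent_rows_iff_isUnit.mp hrows
  exact ((isUnit_iff_isUnit_det _).mp hu).ne_zero

end Minor

section Quot
variable [Fintype m] [Fintype n] [Fintype k] [DecidableEq m] [DecidableEq n]

lemma exists_preimage_family {V W : Type*} [AddCommGroup V] [Module F V]
    [AddCommGroup W] [Module F W] [FiniteDimensional F W]
    (ψ : V →ₗ[F] W) (d : ℕ) (hd : d ≤ finrank F (LinearMap.range ψ)) :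
    ∃ u : Fin d → V, LinearIndependent F (fun i => ψ (u i)) := by
  classical
  let b := Module.finBasis F (LinearMap.range ψ)
  have hmem : ∀ i : Fin d, ∃ v : V, ψ v = (↑(b (Fin.castLE hd i)) : W) :=
    fun i => (b (Fin.castLE hd i)).2
  choose u hu using hmem
  refine ⟨u, ?_⟩
  have heq : (fun i => ψ (u i)) = fun i => (↑(b (Fin.castLE hd i)) : W) := funext hu
  rw [heq]
  have h1 : LinearIndependent F (fun j => (↑(b j) : W)) :=
    b.linearIndependent.map' (LinearMap.range ψ).subtype (Submodule.ker_subtype _)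
  exact h1.comp _ (Fin.castLE_injective hd)

lemma rank_fromColumns_eq_add (A : Matrix m n F) (B : Matrix m k F) :
    (fromCols A B).rank = A.rank +
      finrank F (LinearMap.range ((Submodule.mkQ (LinearMap.range A.mulVecLin)).comp
        B.mulVecLin)) := by
  classical
  set S := LinearMap.range A.mulVecLin with hS
  set T := LinearMap.range B.mulVecLin with hT
  have hsup : (fromCols A B).rank = finrank F ↥(S ⊔ T) := by
    rw [rank_eq_finrank_span_cols, Matrix.col, transpose_fromCols]
    have h1 : Set.range (fromRows Aᵀ Bᵀ) = Set.range Aᵀ ∪ Set.range Bᵀ := by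
      rw [show (fromRows Aᵀ Bᵀ : (n ⊕ k) → m → F) = Sum.elim Aᵀ Bᵀ from rfl]; exact Sum.elim_range _ _
    rw [h1, Submodule.span_union, hS, hT, range_mulVecLin, range_mulVecLin, Matrix.col, Matrix.col]
  set φ := (Submodule.mkQ S).comp T.subtype with hφ
  have hrange : LinearMap.range φ = T.map (Submodule.mkQ S) := by
    rw [hφ, LinearMap.range_comp, Submodule.range_subtype]
  have hker : finrank F ↥(LinearMap.ker φ) = finrank F ↥(S ⊓ T) := by
    rw [hφ, LinearMap.ker_comp, Submodule.ker_mkQ]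
    rw [inf_comm S T, ← Submodule.map_comap_subtype T S]
    exact (Submodule.equivMapOfInjective _ (Submodule.injective_subtype T) _).finrank_eq
  have hrn : finrank F ↥(LinearMap.range φ) + finrank F ↥(LinearMap.ker φ)
      = finrank F ↥T := LinearMap.finrank_range_add_finrank_ker φ
  have hdim : finrank F ↥(S ⊔ T) + finrank F ↥(S ⊓ T) = finrank F ↥S + finrank F ↥T :=
    Submodule.finrank_sup_add_finrank_inf_eq S T
  have hr2 : LinearMap.range ((Submodule.mkQ S).comp B.mulVecLin)
      = T.map (Submodule.mkQ S) := by
    rw [LinearMap.range_comp, hT]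
  have hrka : A.rank = finrank F ↥S := rfl
  rw [hsup, hr2, ← hrange]
  omega

lemma exists_indep_mod (A : Matrix m n F) (B : Matrix m k F) (d : ℕ)
    (hd : d + A.rank ≤ (fromCols A B).rank) :
    ∃ u : Fin d → (k → F), LinearIndependent F
      (fun i => Submodule.mkQ (LinearMap.range A.mulVecLin) (B *ᵥ u i)) := by
  have h := rank_fromColumns_eq_add A B
  obtain ⟨u, hu⟩ := exists_preimage_family
    ((Submodule.mkQ (LinearMap.range A.mulVecLin)).comp B.mulVecLin) d (by omega)
  exact ⟨u, by simpa [LinearMap.comp_apply, mulVecLin_apply] using hu⟩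

end Quot
section Outer
variable [Fintype m] [Fintype n] [Fintype k] [Fintype l]
variable [DecidableEq m] [DecidableEq n]

lemma sum_mulVec' {ι : Type*} (s : Finset ι) (Ms : ι → Matrix m n F) (x : n → F) :
    (∑ i ∈ s, Ms i) *ᵥ x = ∑ i ∈ s, Ms i *ᵥ x := by
  ext j
  simp only [mulVec, dotProduct, Matrix.sum_apply, Finset.sum_apply, Finset.sum_mul]
  rw [Finset.sum_comm]

lemma vecMulVec_mulVec' (b : m → F) (c : n → F) (x : n → F) :
    vecMulVec b c *ᵥ x = (c ⬝ᵥ x) • b := by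
  ext i
  simp only [mulVec, dotProduct, vecMulVec_apply, Pi.smul_apply, smul_eq_mul, Finset.sum_mul]
  exact Finset.sum_congr rfl fun j _ => by ring

lemma mul_vecMulVec_mul (B : Matrix m k F) (u : k → F) (v : l → F) (C : Matrix l n F) :
    B * vecMulVec u v * C = vecMulVec (B *ᵥ u) (Cᵀ *ᵥ v) := by
  ext i j
  simp only [mul_apply, vecMulVec_apply, mulVec, dotProduct, transpose_apply,
    Finset.sum_mul, Finset.mul_sum]
  refine Finset.sum_congr rfl fun t _ => Finset.sum_congr rfl fun s _ => ?_
  ring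

end Outer
section Base
variable [Fintype m] [Fintype n] [Fintype k] [Fintype l]
variable [DecidableEq m] [DecidableEq n] [DecidableEq k] [DecidableEq l]

lemma rank_add_outer_ge (A : Matrix m n F) (d : ℕ) (b : Fin d → (m → F)) (c : Fin d → (n → F))
    (hb : LinearIndependent F (fun i => Submodule.mkQ (LinearMap.range A.mulVecLin) (b i)))
    (hc : LinearIndependent F (fun i => Submodule.mkQ (span F (Set.range A)) (c i))) :
    A.rank + d ≤ (A + ∑ i, vecMulVec (b i) (c i)).rank := by
  classical
  set RS := span F (Set.range A) with hRS
  set Cd : Matrix (Fin d) n F := Matrix.of (fun i => c i) with hCd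
  have hcind : LinearIndependent F c := hc.of_comp _
  have hrow : (fromRows A Cd).rank = A.rank + d := by
    rw [rank_eq_finrank_span_row, Matrix.row]
    have h1 : Set.range (fromRows A Cd) = Set.range A ∪ Set.range c := by
      rw [show (fromRows A Cd : (m ⊕ Fin d) → n → F) = Sum.elim A c from rfl]; exact Sum.elim_range _ _
    rw [h1, Submodule.span_union, ← hRS]
    have hT : finrank F ↥(span F (Set.range c)) = d := by
      rw [finrank_span_eq_card hcind, Fintype.card_fin]
    have hint : RS ⊓ span F (Set.range c) = ⊥ := by
      rw [eq_bot_iff]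
      rintro x ⟨hx1, hx2⟩
      obtain ⟨lam, rfl⟩ := (mem_span_range_iff_exists_fun F).mp hx2
      have h0 : Submodule.mkQ RS (∑ i, lam i • c i) = 0 := by
        rw [Submodule.mkQ_apply, Submodule.Quotient.mk_eq_zero]; exact hx1
      rw [map_sum] at h0
      simp only [_root_.map_smul] at h0
      have hz := Fintype.linearIndependent_iff.mp hc lam h0
      have : (∑ i, lam i • c i) = 0 := by
        refine Finset.sum_eq_zero fun i _ => ?_
        rw [hz i, zero_smul]
      rw [this]; exact Submodule.zero_mem ⊥
    have hdim := Submodule.finrank_sup_add_finrank_inf_eq RS (span F (Set.range c))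
    rw [hint, finrank_bot] at hdim
    have hRSr : A.rank = finrank F ↥RS := rank_eq_finrank_span_row A
    omega
  have hker : LinearMap.ker (A + ∑ i, vecMulVec (b i) (c i)).mulVecLin ≤
      LinearMap.ker (fromRows A Cd).mulVecLin := by
    intro x hx
    rw [LinearMap.mem_ker, mulVecLin_apply] at hx
    have hMx : (A + ∑ i, vecMulVec (b i) (c i)) *ᵥ x = A *ᵥ x + ∑ i, (c i ⬝ᵥ x) • b i := by
      rw [add_mulVec, sum_mulVec']
      congr 1
      exact Finset.sum_congr rfl fun i _ => vecMulVec_mulVec' _ _ _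
    set S := LinearMap.range A.mulVecLin with hSdef
    have hq : ∑ i, (c i ⬝ᵥ x) • Submodule.mkQ S (b i) = 0 := by
      have h5 : Submodule.mkQ S (A *ᵥ x + ∑ i, (c i ⬝ᵥ x) • b i) = 0 := by
        rw [← hMx, hx, map_zero]
      rw [map_add, map_sum] at h5
      simp only [_root_.map_smul] at h5
      have hA0 : Submodule.mkQ S (A *ᵥ x) = 0 := by
        rw [Submodule.mkQ_apply, Submodule.Quotient.mk_eq_zero]
        exact ⟨x, rfl⟩
      rw [hA0, zero_add] at h5; exact h5
    have hcoef : ∀ i, c i ⬝ᵥ x = 0 := Fintype.linearIndependent_iff.mp hb _ hq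
    have hAx : A *ᵥ x = 0 := by
      have h6 : A *ᵥ x + ∑ i, (c i ⬝ᵥ x) • b i = 0 := by rw [← hMx]; exact hx
      have h7 : (∑ i, (c i ⬝ᵥ x) • b i) = 0 := by
        refine Finset.sum_eq_zero fun i _ => ?_
        rw [hcoef i, zero_smul]
      rwa [h7, add_zero] at h6
    rw [LinearMap.mem_ker, mulVecLin_apply, fromRows_mulVec, hAx]
    have hCdx : Cd *ᵥ x = 0 := by
      ext i; exact hcoef i
    rw [hCdx]
    ext (i | i) <;> rfl
  have h1 := LinearMap.finrank_range_add_finrank_ker (A + ∑ i, vecMulVec (b i) (c i)).mulVecLin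
  have h2 := LinearMap.finrank_range_add_finrank_ker (fromRows A Cd).mulVecLin
  rw [Module.finrank_fintype_fun_eq_card] at h1 h2
  have h3 := Submodule.finrank_mono hker
  have e1 : (A + ∑ i, vecMulVec (b i) (c i)).rank
      = finrank F ↥(LinearMap.range (A + ∑ i, vecMulVec (b i) (c i)).mulVecLin) := rfl
  have e2 : (fromRows A Cd).rank = finrank F ↥(LinearMap.range (fromRows A Cd).mulVecLin) := rfl
  omega

lemma exists_rank_sub_eq (A : Matrix m n F) (B : Matrix m k F) (C : Matrix l n F) :
    ∃ X : Matrix k l F,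
      (A - B * X * C).rank = min (fromCols A B).rank (fromRows A C).rank := by
  classical
  set rc := (fromCols A B).rank with hrc
  set rr := (fromRows A C).rank with hrr
  have hra_c : A.rank ≤ rc := rank_le_rank_fromColumns A B
  have hra_r : A.rank ≤ rr := rank_le_rank_fromRows A C
  set d := min rc rr - A.rank with hd
  obtain ⟨u, hu⟩ := exists_indep_mod A B d (by omega)
  have hrr' : (fromCols Aᵀ Cᵀ).rank = rr := by rw [← transpose_fromRows, rank_transpose]
  obtain ⟨v, hv⟩ := exists_indep_mod Aᵀ Cᵀ d (by rw [rank_transpose, hrr']; omega)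
  have hrange : LinearMap.range Aᵀ.mulVecLin = span F (Set.range A) := by
    rw [range_mulVecLin, Matrix.col, transpose_transpose]
  rw [hrange] at hv
  set X : Matrix k l F := -∑ i, vecMulVec (u i) (v i) with hX
  have key : A - B * X * C = A + ∑ i, vecMulVec (B *ᵥ u i) (Cᵀ *ᵥ v i) := by
    have h8 : B * X * C = -∑ i, vecMulVec (B *ᵥ u i) (Cᵀ *ᵥ v i) := by
      rw [hX, Matrix.mul_neg, Matrix.neg_mul]
      congr 1
      rw [Matrix.mul_sum, Matrix.sum_mul]
      exact Finset.sum_congr rfl fun i _ => mul_vecMulVec_mul _ _ _ _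
    rw [h8, sub_neg_eq_add]
  have hge := rank_add_outer_ge A d (fun i => B *ᵥ u i) (fun i => Cᵀ *ᵥ v i) hu hv
  rw [← key] at hge
  have hle : (A - B * X * C).rank ≤ min rc rr :=
    le_min (rank_sub_le_cols A B C X) (rank_sub_le_rows A B C X)
  refine ⟨X, le_antisymm hle ?_⟩
  omega

end Base
section Sim
variable [Infinite F]
variable {m₂ n₂ l₂ : Type*}
variable [Fintype m] [Fintype n] [Fintype k] [Fintype l] [Fintype m₂] [Fintype n₂] [Fintype l₂]
variable [DecidableEq m] [DecidableEq n] [DecidableEq m₂] [DecidableEq n₂]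

lemma eval_matrix_poly (A : Matrix m n F) (P : Matrix m k F) (Q : Matrix l n F)
    (X Y : Matrix k l F) (t : F) :
    (A.map Polynomial.C - P.map Polynomial.C *
        (X.map Polynomial.C + (Y - X).map (fun a => Polynomial.C a * Polynomial.X)) *
        Q.map Polynomial.C).map (Polynomial.evalRingHom t)
      = A - P * (X + t • (Y - X)) * Q := by
  have hsub : ∀ (U V : Matrix m n (Polynomial F)),
      (U - V).map (Polynomial.evalRingHom t) =
        U.map (Polynomial.evalRingHom t) - V.map (Polynomial.evalRingHom t) := fun U V =>
    Matrix.map_sub _ (fun a b => by simp) U V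
  rw [hsub, Matrix.map_mul, Matrix.map_mul]
  congr 1
  · ext i j; simp
  congr 2
  · ext i j; simp
  · ext i j
    simp only [Matrix.map_apply, Matrix.add_apply, Matrix.smul_apply, Matrix.sub_apply,
      map_add, Polynomial.coe_evalRingHom, Polynomial.eval_add, Polynomial.eval_mul,
      Polynomial.eval_C, Polynomial.eval_X, smul_eq_mul]
    ring
  · ext i j; simp

lemma exists_common_ge (A₁ : Matrix m n F) (P₁ : Matrix m k F) (Q₁ : Matrix l n F)
    (A₂ : Matrix m₂ n₂ F) (P₂ : Matrix m₂ k F) (Q₂ : Matrix l n₂ F)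
    (X Y : Matrix k l F) :
    ∃ Z : Matrix k l F, (A₁ - P₁ * X * Q₁).rank ≤ (A₁ - P₁ * Z * Q₁).rank ∧
      (A₂ - P₂ * Y * Q₂).rank ≤ (A₂ - P₂ * Z * Q₂).rank := by
  classical
  obtain ⟨f₁, g₁, h₁⟩ := exists_det_ne_zero (A₁ - P₁ * X * Q₁)
  obtain ⟨f₂, g₂, h₂⟩ := exists_det_ne_zero (A₂ - P₂ * Y * Q₂)
  set W : Matrix k l (Polynomial F) :=
    X.map Polynomial.C + (Y - X).map (fun a => Polynomial.C a * Polynomial.X) with hW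
  set N₁ : Matrix m n (Polynomial F) :=
    A₁.map Polynomial.C - P₁.map Polynomial.C * W * Q₁.map Polynomial.C with hN₁
  set N₂ : Matrix m₂ n₂ (Polynomial F) :=
    A₂.map Polynomial.C - P₂.map Polynomial.C * W * Q₂.map Polynomial.C with hN₂
  set p : Polynomial F := (N₁.submatrix f₁ g₁).det with hp
  set q : Polynomial F := (N₂.submatrix f₂ g₂).det with hq
  have hevalp : ∀ t : F, p.eval t
      = ((A₁ - P₁ * (X + t • (Y - X)) * Q₁).submatrix f₁ g₁).det := by
    intro t
    have h3 : p.eval t = (Polynomial.evalRingHom t) (N₁.submatrix f₁ g₁).det := rfl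
    rw [h3, RingHom.map_det]
    congr 1
    rw [RingHom.mapMatrix_apply]
    have h4 : (N₁.submatrix f₁ g₁).map (Polynomial.evalRingHom t)
        = (N₁.map (Polynomial.evalRingHom t)).submatrix f₁ g₁ := rfl
    rw [h4, hN₁, eval_matrix_poly]
  have hevalq : ∀ t : F, q.eval t
      = ((A₂ - P₂ * (X + t • (Y - X)) * Q₂).submatrix f₂ g₂).det := by
    intro t
    have h3 : q.eval t = (Polynomial.evalRingHom t) (N₂.submatrix f₂ g₂).det := rfl
    rw [h3, RingHom.map_det]
    congr 1
    rw [RingHom.mapMatrix_apply]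
    have h4 : (N₂.submatrix f₂ g₂).map (Polynomial.evalRingHom t)
        = (N₂.map (Polynomial.evalRingHom t)).submatrix f₂ g₂ := rfl
    rw [h4, hN₂, eval_matrix_poly]
  have hp0 : p ≠ 0 := by
    intro h
    apply h₁
    have := hevalp 0
    rw [h] at this
    simpa using this.symm
  have hq0 : q ≠ 0 := by
    intro h
    apply h₂
    have := hevalq 1
    rw [h] at this
    simpa using this.symm
  have hpq : p * q ≠ 0 := mul_ne_zero hp0 hq0
  obtain ⟨t, ht⟩ : ∃ t : F, (p * q).eval t ≠ 0 := by
    by_contra hcon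
    push_neg at hcon
    exact hpq (Polynomial.zero_of_eval_zero _ hcon)
  rw [Polynomial.eval_mul] at ht
  refine ⟨X + t • (Y - X), ?_, ?_⟩
  · apply le_rank_of_det_ne_zero _ f₁ g₁
    rw [← hevalp t]
    exact fun h => ht (by rw [h, zero_mul])
  · apply le_rank_of_det_ne_zero _ f₂ g₂
    rw [← hevalq t]
    exact fun h => ht (by rw [h, mul_zero])

end Sim
section BlockAlg
variable [Fintype m] [Fintype n] [Fintype k] [Fintype l]

lemma fromColumns_sub (A₁ : Matrix m n F) (A₂ : Matrix m k F) (B₁ : Matrix m n F)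
    (B₂ : Matrix m k F) :
    fromCols A₁ A₂ - fromCols B₁ B₂ = fromCols (A₁ - B₁) (A₂ - B₂) := by
  ext i (j | j) <;> simp

lemma fromRows_sub (A₁ : Matrix m n F) (A₂ : Matrix k n F) (B₁ : Matrix m n F)
    (B₂ : Matrix k n F) :
    fromRows A₁ A₂ - fromRows B₁ B₂ = fromRows (A₁ - B₁) (A₂ - B₂) := by
  ext (i | i) j <;> simp

lemma fromBlocks_sub (A₁ : Matrix m n F) (B₁ : Matrix m k F) (C₁ : Matrix l n F)
    (D₁ : Matrix l k F) (A₂ : Matrix m n F) (B₂ : Matrix m k F) (C₂ : Matrix l n F)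
    (D₂ : Matrix l k F) :
    fromBlocks A₁ B₁ C₁ D₁ - fromBlocks A₂ B₂ C₂ D₂
      = fromBlocks (A₁ - A₂) (B₁ - B₂) (C₁ - C₂) (D₁ - D₂) := by
  ext (i | i) (j | j) <;> simp

end BlockAlg

section Ident

variable {k3 k4 l3 l4 : Type*}
variable [Fintype m] [Fintype n] [Fintype k] [Fintype l]
variable [Fintype k3] [Fintype k4] [Fintype l3] [Fintype l4]
variable [DecidableEq m] [DecidableEq n] [DecidableEq k] [DecidableEq l]
variable [DecidableEq k3] [DecidableEq k4] [DecidableEq l3] [DecidableEq l4]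
variable (A : Matrix m n F) (B1 : Matrix m k F) (C2 : Matrix l n F)
variable (B3 : Matrix m k3 F) (C3 : Matrix l3 n F) (B4 : Matrix m k4 F) (C4 : Matrix l4 n F)

lemma rank_I1 :
    (fromCols (fromCols (fromBlocks A B1 C2 0) (fromRows B4 0)) (fromRows B3 0)).rank
      = (fromBlocks A (fromCols B1 (fromCols B3 B4)) C2 0).rank := by
  have he : fromCols (fromCols (fromBlocks A B1 C2 0) (fromRows B4 0)) (fromRows B3 0)
      = (fromBlocks A (fromCols B1 (fromCols B3 B4)) C2 0).submatrix
          (Equiv.refl (m ⊕ l))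
          ((Equiv.sumAssoc (n ⊕ k) k4 k3).trans
            ((Equiv.sumCongr (Equiv.refl (n ⊕ k)) (Equiv.sumComm k4 k3)).trans
              (Equiv.sumAssoc n k (k3 ⊕ k4)))) := by
    ext (i | i) (((j | j) | j) | j) <;> simp [Equiv.sumAssoc, Equiv.sumComm, Equiv.sumCongr]
  rw [he, rank_submatrix_eq]

lemma rank_I2 :
    (fromRows (fromCols (fromBlocks A B1 C2 0) (fromRows B4 0))
        (fromCols (fromCols C3 0) 0)).rank
      = (fromBlocks A (fromCols B1 B4) (fromRows C2 C3) 0).rank := by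
  have he : fromRows (fromCols (fromBlocks A B1 C2 0) (fromRows B4 0))
        (fromCols (fromCols C3 0) 0)
      = (fromBlocks A (fromCols B1 B4) (fromRows C2 C3) 0).submatrix
          (Equiv.sumAssoc m l l3) (Equiv.sumAssoc n k k4) := by
    ext ((i | i) | i) ((j | j) | j) <;> simp [Equiv.sumAssoc]
  rw [he, rank_submatrix_eq]

lemma rank_I3 :
    (fromCols (fromRows (fromBlocks A B1 C2 0) (fromCols C4 0))
        (fromRows (fromRows B3 0) 0)).rank
      = (fromBlocks A (fromCols B1 B3) (fromRows C2 C4) 0).rank := by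
  have he : fromCols (fromRows (fromBlocks A B1 C2 0) (fromCols C4 0))
        (fromRows (fromRows B3 0) 0)
      = (fromBlocks A (fromCols B1 B3) (fromRows C2 C4) 0).submatrix
          (Equiv.sumAssoc m l l4) (Equiv.sumAssoc n k k3) := by
    ext ((i | i) | i) ((j | j) | j) <;> simp [Equiv.sumAssoc]
  rw [he, rank_submatrix_eq]

lemma rank_I4 :
    (fromRows (fromRows (fromBlocks A B1 C2 0) (fromCols C4 0)) (fromCols C3 0)).rank
      = (fromBlocks A B1 (fromRows C2 (fromRows C3 C4)) 0).rank := by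
  have he : fromRows (fromRows (fromBlocks A B1 C2 0) (fromCols C4 0)) (fromCols C3 0)
      = (fromBlocks A B1 (fromRows C2 (fromRows C3 C4)) 0).submatrix
          ((Equiv.sumAssoc (m ⊕ l) l4 l3).trans
            ((Equiv.sumCongr (Equiv.refl (m ⊕ l)) (Equiv.sumComm l4 l3)).trans
              (Equiv.sumAssoc m l (l3 ⊕ l4))))
          (Equiv.refl (n ⊕ k)) := by
    ext (((i | i) | i) | i) (j | j) <;> simp [Equiv.sumAssoc, Equiv.sumComm, Equiv.sumCongr]
  rw [he, rank_submatrix_eq]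

end Ident

lemma sub_group1 {a : Type*} [AddCommGroup a] (x y c d e : a) :
    x - y - (c + (d + e)) = x - y - c - d - e := by abel

lemma sub_group2 {a : Type*} [AddCommGroup a] (x y c d e : a) :
    x - (y + (d + e)) - c = x - y - c - d - e := by abel

lemma sub_group3 {a : Type*} [AddCommGroup a] (x y c d e : a) :
    x - (y + d) - (c + e) = x - y - c - d - e := by abel

lemma sub_group4 {a : Type*} [AddCommGroup a] (x y c d e : a) :
    x - (y + d) - (c + e) = x - y - c - e - d := by abel

end MaxRankAux

open MaxRankAux

set_option maxHeartbeats 1600000 in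
/-- Maximal rank of `A - B1*X1 - X2*C2 - B3*X3*C3 - B4*X4*C4`. -/
theorem max_rank_f2 (m n k l k3 l3 k4 l4 : ℕ)
    (A : Matrix (Fin m) (Fin n) ℂ) (B1 : Matrix (Fin m) (Fin k) ℂ)
    (C2 : Matrix (Fin l) (Fin n) ℂ) (B3 : Matrix (Fin m) (Fin k3) ℂ)
    (C3 : Matrix (Fin l3) (Fin n) ℂ) (B4 : Matrix (Fin m) (Fin k4) ℂ)
    (C4 : Matrix (Fin l4) (Fin n) ℂ) :
    IsGreatest {r : ℕ | ∃ (X1 : Matrix (Fin k) (Fin n) ℂ) (X2 : Matrix (Fin m) (Fin l) ℂ)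
        (X3 : Matrix (Fin k3) (Fin l3) ℂ) (X4 : Matrix (Fin k4) (Fin l4) ℂ),
        r = (A - B1 * X1 - X2 * C2 - B3 * X3 * C3 - B4 * X4 * C4).rank}
      (min (min m n)
        (min (min (fromBlocks A B1 (fromRows C2 (fromRows C3 C4)) 0).rank
                  (fromBlocks A (fromCols B1 (fromCols B3 B4)) C2 0).rank)
             (min (fromBlocks A (fromCols B1 B3) (fromRows C2 C4) 0).rank
                  (fromBlocks A (fromCols B1 B4) (fromRows C2 C3) 0).rank))) := by
  classical
  constructor
  · -- attainability
    obtain ⟨X3a, hX3a⟩ := exists_rank_sub_eq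
      (fromCols (fromBlocks A B1 C2 (0 : Matrix (Fin l) (Fin k) ℂ))
        (fromRows B4 (0 : Matrix (Fin l) (Fin k4) ℂ)))
      (fromRows B3 (0 : Matrix (Fin l) (Fin k3) ℂ))
      (fromCols (fromCols C3 (0 : Matrix (Fin l3) (Fin k) ℂ))
        (0 : Matrix (Fin l3) (Fin k4) ℂ))
    obtain ⟨X3b, hX3b⟩ := exists_rank_sub_eq
      (fromRows (fromBlocks A B1 C2 (0 : Matrix (Fin l) (Fin k) ℂ))
        (fromCols C4 (0 : Matrix (Fin l4) (Fin k) ℂ)))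
      (fromRows (fromRows B3 (0 : Matrix (Fin l) (Fin k3) ℂ))
        (0 : Matrix (Fin l4) (Fin k3) ℂ))
      (fromCols C3 (0 : Matrix (Fin l3) (Fin k) ℂ))
    obtain ⟨X3, hc1, hc2⟩ := exists_common_ge
      (fromCols (fromBlocks A B1 C2 (0 : Matrix (Fin l) (Fin k) ℂ))
        (fromRows B4 (0 : Matrix (Fin l) (Fin k4) ℂ)))
      (fromRows B3 (0 : Matrix (Fin l) (Fin k3) ℂ))
      (fromCols (fromCols C3 (0 : Matrix (Fin l3) (Fin k) ℂ))
        (0 : Matrix (Fin l3) (Fin k4) ℂ))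
      (fromRows (fromBlocks A B1 C2 (0 : Matrix (Fin l) (Fin k) ℂ))
        (fromCols C4 (0 : Matrix (Fin l4) (Fin k) ℂ)))
      (fromRows (fromRows B3 (0 : Matrix (Fin l) (Fin k3) ℂ))
        (0 : Matrix (Fin l4) (Fin k3) ℂ))
      (fromCols C3 (0 : Matrix (Fin l3) (Fin k) ℂ))
      X3a X3b
    have hA1r : (fromCols (fromBlocks A B1 C2 (0 : Matrix (Fin l) (Fin k) ℂ))
          (fromRows B4 (0 : Matrix (Fin l) (Fin k4) ℂ))
        - fromRows B3 (0 : Matrix (Fin l) (Fin k3) ℂ) * X3 *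
          fromCols (fromCols C3 (0 : Matrix (Fin l3) (Fin k) ℂ))
            (0 : Matrix (Fin l3) (Fin k4) ℂ)).rank
        = min
          ((fromCols (fromCols (fromBlocks A B1 C2 0) (fromRows B4 0))
            (fromRows B3 0)).rank)
          ((fromRows (fromCols (fromBlocks A B1 C2 0) (fromRows B4 0))
            (fromCols (fromCols C3 0) 0)).rank) := by
      refine le_antisymm (le_min (rank_sub_le_cols _ _ _ _) (rank_sub_le_rows _ _ _ _)) ?_
      rw [← hX3a]; exact hc1
    have hA2r : (fromRows (fromBlocks A B1 C2 (0 : Matrix (Fin l) (Fin k) ℂ))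
          (fromCols C4 (0 : Matrix (Fin l4) (Fin k) ℂ))
        - fromRows (fromRows B3 (0 : Matrix (Fin l) (Fin k3) ℂ))
            (0 : Matrix (Fin l4) (Fin k3) ℂ) * X3 *
          fromCols C3 (0 : Matrix (Fin l3) (Fin k) ℂ)).rank
        = min
          ((fromCols (fromRows (fromBlocks A B1 C2 0) (fromCols C4 0))
            (fromRows (fromRows B3 0) 0)).rank)
          ((fromRows (fromRows (fromBlocks A B1 C2 0) (fromCols C4 0))
            (fromCols C3 0)).rank) := by
      refine le_antisymm (le_min (rank_sub_le_cols _ _ _ _) (rank_sub_le_rows _ _ _ _)) ?_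
      rw [← hX3b]; exact hc2
    obtain ⟨X4, hX4⟩ := exists_rank_sub_eq
      (fromBlocks A B1 C2 (0 : Matrix (Fin l) (Fin k) ℂ)
        - fromRows B3 (0 : Matrix (Fin l) (Fin k3) ℂ) * X3 *
          fromCols C3 (0 : Matrix (Fin l3) (Fin k) ℂ))
      (fromRows B4 (0 : Matrix (Fin l) (Fin k4) ℂ))
      (fromCols C4 (0 : Matrix (Fin l4) (Fin k) ℂ))
    have E1 : fromCols
          (fromBlocks A B1 C2 (0 : Matrix (Fin l) (Fin k) ℂ)
            - fromRows B3 (0 : Matrix (Fin l) (Fin k3) ℂ) * X3 *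
              fromCols C3 (0 : Matrix (Fin l3) (Fin k) ℂ))
          (fromRows B4 (0 : Matrix (Fin l) (Fin k4) ℂ))
        = fromCols (fromBlocks A B1 C2 (0 : Matrix (Fin l) (Fin k) ℂ))
            (fromRows B4 (0 : Matrix (Fin l) (Fin k4) ℂ))
          - fromRows B3 (0 : Matrix (Fin l) (Fin k3) ℂ) * X3 *
            fromCols (fromCols C3 (0 : Matrix (Fin l3) (Fin k) ℂ))
              (0 : Matrix (Fin l3) (Fin k4) ℂ) := by
      ext i j
      rcases i with i | i <;> rcases j with (j | j) | j <;> simp [mul_apply]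
    have E2 : fromRows
          (fromBlocks A B1 C2 (0 : Matrix (Fin l) (Fin k) ℂ)
            - fromRows B3 (0 : Matrix (Fin l) (Fin k3) ℂ) * X3 *
              fromCols C3 (0 : Matrix (Fin l3) (Fin k) ℂ))
          (fromCols C4 (0 : Matrix (Fin l4) (Fin k) ℂ))
        = fromRows (fromBlocks A B1 C2 (0 : Matrix (Fin l) (Fin k) ℂ))
            (fromCols C4 (0 : Matrix (Fin l4) (Fin k) ℂ))
          - fromRows (fromRows B3 (0 : Matrix (Fin l) (Fin k3) ℂ))
              (0 : Matrix (Fin l4) (Fin k3) ℂ) * X3 *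
            fromCols C3 (0 : Matrix (Fin l3) (Fin k) ℂ) := by
      ext i j
      rcases i with (i | i) | i <;> rcases j with j | j <;> simp [mul_apply]
    rw [E1, E2, hA1r, hA2r] at hX4
    have E3 : fromBlocks A B1 C2 (0 : Matrix (Fin l) (Fin k) ℂ)
          - fromRows B3 (0 : Matrix (Fin l) (Fin k3) ℂ) * X3 *
            fromCols C3 (0 : Matrix (Fin l3) (Fin k) ℂ)
          - fromRows B4 (0 : Matrix (Fin l) (Fin k4) ℂ) * X4 *
            fromCols C4 (0 : Matrix (Fin l4) (Fin k) ℂ)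
        = fromBlocks (A - B3 * X3 * C3 - B4 * X4 * C4) B1 C2 0 := by
      ext i j
      rcases i with i | i <;> rcases j with j | j <;> simp [mul_apply]
    rw [E3] at hX4
    obtain ⟨X1, hX1⟩ := exists_rank_sub_eq
      (fromRows (A - B3 * X3 * C3 - B4 * X4 * C4) C2)
      (fromRows B1 (0 : Matrix (Fin l) (Fin k) ℂ))
      (1 : Matrix (Fin n) (Fin n) ℂ)
    rw [Matrix.mul_one, fromRows_mul, Matrix.zero_mul, fromRows_sub, sub_zero,
      fromCols_fromRows_eq_fromBlocks, rank_fromRows_one, Fintype.card_fin] at hX1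
    obtain ⟨X2, hX2⟩ := exists_rank_sub_eq
      (A - B3 * X3 * C3 - B4 * X4 * C4 - B1 * X1)
      (1 : Matrix (Fin m) (Fin m) ℂ) C2
    rw [Matrix.one_mul, rank_fromColumns_one, Fintype.card_fin] at hX2
    have EF : A - B3 * X3 * C3 - B4 * X4 * C4 - B1 * X1 - X2 * C2
        = A - B1 * X1 - X2 * C2 - B3 * X3 * C3 - B4 * X4 * C4 := by abel
    rw [EF] at hX2
    have hI1 := rank_I1 (F := ℂ) A B1 C2 B3 B4
    have hI2 := rank_I2 (F := ℂ) A B1 C2 C3 B4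
    have hI3 := rank_I3 (F := ℂ) A B1 C2 B3 C4
    have hI4 := rank_I4 (F := ℂ) A B1 C2 C3 C4
    exact ⟨X1, X2, X3, X4, by omega⟩
  · -- upper bound
    rintro r ⟨X1, X2, X3, X4, rfl⟩
    have hm : (A - B1 * X1 - X2 * C2 - B3 * X3 * C3 - B4 * X4 * C4).rank ≤ m :=
      rank_le_height _
    have hn : (A - B1 * X1 - X2 * C2 - B3 * X3 * C3 - B4 * X4 * C4).rank ≤ n :=
      rank_le_width _
    have ht1 : (A - B1 * X1 - X2 * C2 - B3 * X3 * C3 - B4 * X4 * C4).rank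
        ≤ (fromBlocks A B1 (fromRows C2 (fromRows C3 C4)) 0).rank := by
      have hq : A - B1 * X1 - X2 * C2 - B3 * X3 * C3 - B4 * X4 * C4
          = A - B1 * X1 - (fromCols X2 (fromCols (B3 * X3) (B4 * X4)))
              * (fromRows C2 (fromRows C3 C4)) := by
        rw [fromCols_mul_fromRows, fromCols_mul_fromRows, sub_group1]
      rw [hq]
      exact rank_sub_sub_le _ _ _ _ _
    have ht2 : (A - B1 * X1 - X2 * C2 - B3 * X3 * C3 - B4 * X4 * C4).rank
        ≤ (fromBlocks A (fromCols B1 (fromCols B3 B4)) C2 0).rank := by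
      have hq : A - B1 * X1 - X2 * C2 - B3 * X3 * C3 - B4 * X4 * C4
          = A - (fromCols B1 (fromCols B3 B4))
              * (fromRows X1 (fromRows (X3 * C3) (X4 * C4))) - X2 * C2 := by
        rw [fromCols_mul_fromRows, fromCols_mul_fromRows,
          ← Matrix.mul_assoc B3 X3 C3, ← Matrix.mul_assoc B4 X4 C4, sub_group2]
      rw [hq]
      exact rank_sub_sub_le _ _ _ _ _
    have ht3 : (A - B1 * X1 - X2 * C2 - B3 * X3 * C3 - B4 * X4 * C4).rank
        ≤ (fromBlocks A (fromCols B1 B3) (fromRows C2 C4) 0).rank := by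
      have hq : A - B1 * X1 - X2 * C2 - B3 * X3 * C3 - B4 * X4 * C4
          = A - (fromCols B1 B3) * (fromRows X1 (X3 * C3))
              - (fromCols X2 (B4 * X4)) * (fromRows C2 C4) := by
        rw [fromCols_mul_fromRows, fromCols_mul_fromRows,
          ← Matrix.mul_assoc B3 X3 C3, sub_group3]
      rw [hq]
      exact rank_sub_sub_le _ _ _ _ _
    have ht4 : (A - B1 * X1 - X2 * C2 - B3 * X3 * C3 - B4 * X4 * C4).rank
        ≤ (fromBlocks A (fromCols B1 B4) (fromRows C2 C3) 0).rank := by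
      have hq : A - B1 * X1 - X2 * C2 - B3 * X3 * C3 - B4 * X4 * C4
          = A - (fromCols B1 B4) * (fromRows X1 (X4 * C4))
              - (fromCols X2 (B3 * X3)) * (fromRows C2 C3) := by
        rw [fromCols_mul_fromRows, fromCols_mul_fromRows,
          ← Matrix.mul_assoc B4 X4 C4, sub_group4]
      rw [hq]
      exact rank_sub_sub_le _ _ _ _ _
    omega
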